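/- Let A be a finite-dimensional commutative (not necessarily associative or unital) algebra over a field F, and let e, f ∈ A be idempotents with e·f = f. Suppose that ad(e) and ad(f) are diagonalisable and that f associates with its {1,0}-eigenspace, i.e. f·(x·z) = (f·x)·z for all x ∈ A and z ∈ A^f_1 + A^f_0. Then e − f is an idempotent and ad(e − f) is diagonalisable. -/

import Mathlib

open Module

/-- If `g` and `h` are commuting diagonalisable endomorphisms, then `g - h` is
diagonalisable. -/
lemma diag_sub_of_commute {F A : Type*} [Field F] [AddCommGroup A] [Module F A]
    (g h : Module.End F A) (hc : Commute g h)
    (hg : (⨆ φ : F, Module.End.eigenspace g φ) = ⊤)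
    (hh : (⨆ φ : F, Module.End.eigenspace h φ) = ⊤) :
    (⨆ φ : F, Module.End.eigenspace (g - h) φ) = ⊤ := by
  classical
  rw [eq_top_iff, ← hg]
  refine iSup_le fun φ => fun v hv => ?_
  have hv' : v ∈ ⨆ ψ : F, Module.End.eigenspace h ψ := by rw [hh]; trivial
  obtain ⟨w, hw⟩ := (Submodule.mem_iSup_iff_exists_dfinsupp _ v).mp hv'
  set L := DFinsupp.lsum ℕ (M := fun ψ : F ↦ ↥(Module.End.eigenspace h ψ))
    (fun ψ => (Module.End.eigenspace h ψ).subtype) with hL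
  have inv : ∀ ψ : F, ∀ z ∈ Module.End.eigenspace h ψ,
      (g - φ • (1 : Module.End F A)) z ∈ Module.End.eigenspace h ψ := by
    intro ψ z hz
    rw [Module.End.mem_eigenspace_iff] at hz ⊢
    have hgh : h (g z) = g (h z) := by
      have := hc.symm
      simpa [Module.End.mul_apply] using congrArg (fun T : Module.End F A => T z) this
    simp [hgh, hz, map_smul, smul_sub, smul_comm ψ φ]
  let T : ∀ ψ : F, Module.End.eigenspace h ψ →ₗ[F] Module.End.eigenspace h ψ :=
    fun ψ => (g - φ • (1 : Module.End F A)).restrict (fun z hz => inv ψ z hz)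
  let w' : Π₀ ψ : F, Module.End.eigenspace h ψ :=
    DFinsupp.mapRange (fun ψ => T ψ) (fun ψ => map_zero _) w
  have key : L w' = (g - φ • (1 : Module.End F A)) (L w) := by
    have : L.comp (DFinsupp.mapRange.linearMap T)
        = (g - φ • (1 : Module.End F A)) ∘ₗ L := by
      refine DFinsupp.lhom_ext' fun ψ => ?_
      ext z
      simp [L, T, LinearMap.restrict_apply]
    have := congrArg (fun M => M w) this
    exact this
  have hvz : (g - φ • (1 : Module.End F A)) v = 0 := by
    rw [Module.End.mem_eigenspace_iff] at hv
    simp [hv]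
  have hw0 : w' = 0 := by
    apply (Module.End.eigenspaces_iSupIndep h).dfinsupp_lsum_injective
    rw [key, hw, hvz, map_zero]
  have hcomp : ∀ ψ : F, (w ψ : A) ∈ Module.End.eigenspace (g - h) (φ - ψ) := by
    intro ψ
    have h1 : (g - φ • (1 : Module.End F A)) (w ψ : A) = 0 := by
      have := congrArg (fun x => ((x ψ : Module.End.eigenspace h ψ) : A)) hw0
      simpa [w', T, LinearMap.restrict_apply] using this
    have h2 : g (w ψ : A) = φ • (w ψ : A) := by
      have := h1
      simp only [LinearMap.sub_apply, LinearMap.smul_apply, Module.End.one_apply,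
        sub_eq_zero] at this
      exact this
    have h3 : h (w ψ : A) = ψ • (w ψ : A) :=
      Module.End.mem_eigenspace_iff.mp (w ψ).2
    rw [Module.End.mem_eigenspace_iff]
    simp [h2, h3, sub_smul]
  rw [← hw, hL, DFinsupp.lsum_apply_apply]
  exact Submodule.dfinsuppSumAddHom_mem _ w _ fun ψ _ =>
    Submodule.mem_iSup_of_mem (φ - ψ) (hcomp ψ)

/-- if `e, f` are idempotents with `e·f = f`, `ad e` and `ad f` are
diagonalisable, and `f` associates with its `{1,0}`-eigenspace, then `e - f` is an
idempotent with diagonalisable adjoint. -/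
theorem sub_idem_diagonalisable {F : Type*} [Field F] {A : Type*} [NonUnitalNonAssocRing A]
    [Module F A] [SMulCommClass F A A] [IsScalarTower F A A] [FiniteDimensional F A]
    (comm : ∀ a b : A, a * b = b * a)
    (e f : A) (he : e * e = e) (hf : f * f = f) (hef : e * f = f)
    (hde : (⨆ φ : F, Module.End.eigenspace (LinearMap.mul F A e) φ) = ⊤)
    (hdf : (⨆ φ : F, Module.End.eigenspace (LinearMap.mul F A f) φ) = ⊤)
    (hfassoc : ∀ x z : A,
        z ∈ Module.End.eigenspace (LinearMap.mul F A f) 1 ⊔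
            Module.End.eigenspace (LinearMap.mul F A f) 0 →
        f * (x * z) = (f * x) * z) :
    (e - f) * (e - f) = e - f ∧
      (⨆ φ : F, Module.End.eigenspace (LinearMap.mul F A (e - f)) φ) = ⊤ := by
  have hfe : f * e = f := by rw [comm]; exact hef
  have hfu : f * (e - f) = 0 := by rw [mul_sub, hfe, hf, sub_self]
  constructor
  · rw [sub_mul, mul_sub, mul_sub, he, hef, hfe, hf]
    abel
  · have humem : (e - f) ∈ Module.End.eigenspace (LinearMap.mul F A f) 1 ⊔
        Module.End.eigenspace (LinearMap.mul F A f) 0 := by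
      refine Submodule.mem_sup_right ?_
      rw [Module.End.mem_eigenspace_iff]
      simpa using hfu
    have hcomm : Commute (LinearMap.mul F A f) (LinearMap.mul F A (e - f)) := by
      ext x
      have h1 : f * (x * (e - f)) = (f * x) * (e - f) := hfassoc x (e - f) humem
      simp only [Module.End.mul_apply, LinearMap.mul_apply_apply]
      calc f * ((e - f) * x) = f * (x * (e - f)) := by rw [comm (e - f) x]
        _ = (f * x) * (e - f) := h1
        _ = (e - f) * (f * x) := comm _ _
    have hmule : LinearMap.mul F A e = LinearMap.mul F A (e - f) + LinearMap.mul F A f := by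
      have h := map_sub (LinearMap.mul F A) e f
      rw [h]
      abel
    have hcef : Commute (LinearMap.mul F A e) (LinearMap.mul F A f) := by
      rw [hmule]
      exact (hcomm.symm.add_left (Commute.refl _))
    have := diag_sub_of_commute (LinearMap.mul F A e) (LinearMap.mul F A f) hcef hde hdf
    rwa [← map_sub (LinearMap.mul F A)] at this
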